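/- Let B be a symmetric m×m matrix and X a positive semidefinite m×m matrix. Then max{⟨P, B⟩ : 0 ⪯ P ⪯ X} = Tr((X^{1/2} B X^{1/2})₊), where ⟨P,B⟩ = Tr(PB) and M₊ denotes the matrix obtained from the symmetric matrix M by replacing its negative eigenvalues with zero (so Tr(M₊) is the sum of positive eigenvalues of M). -/

import Mathlib

open Matrix
open scoped BigOperators

section
open scoped ComplexOrder

/-- The positive semidefinite square root of a PSD matrix (as `Matrix.PosSemidef.sqrt` was defined
in Mathlib of December 2024; it has since been removed in favour of `CFC.sqrt`). -/
noncomputable def Matrix.PosSemidef.sqrt {n 𝕜 : Type*} [Fintype n] [DecidableEq n] [RCLike 𝕜]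
    {A : Matrix n n 𝕜} (hA : A.PosSemidef) : Matrix n n 𝕜 :=
  hA.1.eigenvectorUnitary.1 * diagonal ((↑) ∘ (√·) ∘ hA.1.eigenvalues) *
    (star hA.1.eigenvectorUnitary : Matrix n n 𝕜)

end

namespace Stmt14Aux

variable {m : ℕ}

lemma cg_mul (V : Matrix (Fin m) (Fin m) ℝ) (h : star V * V = 1) (f g : Fin m → ℝ) :
    (V * diagonal f * star V) * (V * diagonal g * star V)
      = V * diagonal (fun i => f i * g i) * star V := by
  have hd : diagonal f * diagonal g = diagonal (fun i => f i * g i) := by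
    rw [diagonal_mul_diagonal]
  calc (V * diagonal f * star V) * (V * diagonal g * star V)
      = V * diagonal f * (star V * V) * diagonal g * star V := by
        simp only [mul_assoc]
    _ = V * (diagonal f * diagonal g) * star V := by rw [h]; simp only [mul_one, mul_assoc]
    _ = V * diagonal (fun i => f i * g i) * star V := by rw [hd]

lemma cg_sub (V : Matrix (Fin m) (Fin m) ℝ) (f g : Fin m → ℝ) :
    V * diagonal f * star V - V * diagonal g * star V
      = V * diagonal (fun i => f i - g i) * star V := by
  have h1 : diagonal (fun i => f i - g i) = diagonal f - diagonal g := by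
    ext i j; by_cases h : i = j <;> simp [diagonal, h]
  rw [h1, mul_sub, sub_mul]

lemma cg_trace (V : Matrix (Fin m) (Fin m) ℝ) (h : star V * V = 1) (f : Fin m → ℝ) :
    (V * diagonal f * star V).trace = ∑ i, f i := by
  rw [trace_mul_cycle, h, one_mul, trace_diagonal]

lemma cg_psd (V : Matrix (Fin m) (Fin m) ℝ) (f : Fin m → ℝ) (hf : ∀ i, 0 ≤ f i) :
    (V * diagonal f * star V).PosSemidef := by
  have := (posSemidef_diagonal_iff.mpr hf).mul_mul_conjTranspose_same V
  simpa [star_eq_conjTranspose] using this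

lemma cg_herm (V : Matrix (Fin m) (Fin m) ℝ) (f : Fin m → ℝ) :
    (V * diagonal f * star V).IsHermitian := by
  have := (isHermitian_mul_mul_conjTranspose V (A := diagonal f) (isHermitian_diagonal f))
  simpa [star_eq_conjTranspose] using this

lemma trace_psd_nonneg {A : Matrix (Fin m) (Fin m) ℝ} (hA : A.PosSemidef) : 0 ≤ A.trace := by
  rw [trace]
  refine Finset.sum_nonneg fun i _ => ?_
  have := hA.diag_nonneg (i := i)
  simpa [diag] using this

lemma psd_spec {A : Matrix (Fin m) (Fin m) ℝ} (hA : A.PosSemidef) :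
    A = (hA.1.eigenvectorUnitary : Matrix (Fin m) (Fin m) ℝ) * diagonal hA.1.eigenvalues
      * star (hA.1.eigenvectorUnitary : Matrix (Fin m) (Fin m) ℝ) := by
  have := hA.1.spectral_theorem
  simpa [RCLike.ofReal_real_eq_id, Unitary.conjStarAlgAut_apply] using this

lemma psd_sqrt_eq {A : Matrix (Fin m) (Fin m) ℝ} (hA : A.PosSemidef) :
    hA.sqrt = (hA.1.eigenvectorUnitary : Matrix (Fin m) (Fin m) ℝ)
      * diagonal (fun i => Real.sqrt (hA.1.eigenvalues i))
      * star (hA.1.eigenvectorUnitary : Matrix (Fin m) (Fin m) ℝ) := by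
  rw [Matrix.PosSemidef.sqrt]
  simp [RCLike.ofReal_real_eq_id, Function.comp_def]

lemma psd_sqrt_mul_self {A : Matrix (Fin m) (Fin m) ℝ} (hA : A.PosSemidef) :
    hA.sqrt * hA.sqrt = A := by
  have hV1 : star (hA.1.eigenvectorUnitary : Matrix (Fin m) (Fin m) ℝ)
      * (hA.1.eigenvectorUnitary : Matrix (Fin m) (Fin m) ℝ) = 1 :=
    Matrix.UnitaryGroup.star_mul_self hA.1.eigenvectorUnitary
  rw [psd_sqrt_eq, cg_mul _ hV1]
  conv_rhs => rw [psd_spec hA]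
  refine congrArg (fun D => _ * D * _) (congrArg diagonal (funext fun i => ?_))
  exact Real.mul_self_sqrt (hA.eigenvalues_nonneg i)

lemma psd_sqrt_herm {A : Matrix (Fin m) (Fin m) ℝ} (hA : A.PosSemidef) :
    hA.sqrtᴴ = hA.sqrt := by
  rw [psd_sqrt_eq]; exact cg_herm _ _

lemma trace_mul_nonneg {A B : Matrix (Fin m) (Fin m) ℝ} (hA : A.PosSemidef)
    (hB : B.PosSemidef) : 0 ≤ (A * B).trace := by
  have h1 : A = hA.sqrt * hA.sqrt := (psd_sqrt_mul_self hA).symm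
  have h2 : (A * B).trace = (hA.sqrt * B * hA.sqrt).trace := by
    conv_lhs => rw [h1]
    rw [mul_assoc, trace_mul_comm]
  rw [h2]
  have h3 := hB.mul_mul_conjTranspose_same hA.sqrt
  rw [psd_sqrt_herm hA] at h3
  exact trace_psd_nonneg h3

end Stmt14Aux

open Stmt14Aux

theorem stmt14 {m : ℕ} (B X : Matrix (Fin m) (Fin m) ℝ)
    (hB : B.IsSymm) (hX : X.PosSemidef)
    (hH : (hX.sqrt * B * hX.sqrt).IsHermitian) :
    IsGreatest {r | ∃ P : Matrix (Fin m) (Fin m) ℝ,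
        P.PosSemidef ∧ (X - P).PosSemidef ∧ r = (P * B).trace}
      (∑ i, max (hH.eigenvalues i) 0) := by
  classical
  set S := hX.sqrt with hSdef
  set V : Matrix (Fin m) (Fin m) ℝ := ↑hX.1.eigenvectorUnitary with hVdef
  set d : Fin m → ℝ := hX.1.eigenvalues with hddef
  have hV1 : star V * V = 1 := by
    simpa [hVdef] using Matrix.UnitaryGroup.star_mul_self hX.1.eigenvectorUnitary
  have hV2 : V * star V = 1 := mul_eq_one_comm.mp hV1
  have hd : ∀ i, 0 ≤ d i := fun i => hX.eigenvalues_nonneg i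
  have hXspec : X = V * diagonal d * star V := by
    have := hX.1.spectral_theorem
    simpa [RCLike.ofReal_real_eq_id, Unitary.conjStarAlgAut_apply, hVdef, hddef] using this
  have hS : S = V * diagonal (fun i => Real.sqrt (d i)) * star V := by
    rw [hSdef, Matrix.PosSemidef.sqrt]
    simp [RCLike.ofReal_real_eq_id, Function.comp_def, hVdef, hddef, mul_assoc]
  set g : Fin m → ℝ := fun i => if d i = 0 then 0 else (Real.sqrt (d i))⁻¹ with hgdef
  set p : Fin m → ℝ := fun i => if d i = 0 then 0 else 1 with hpdef
  have hsqrt_ne : ∀ i, d i ≠ 0 → Real.sqrt (d i) ≠ 0 := fun i h =>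
    ne_of_gt (Real.sqrt_pos.mpr (lt_of_le_of_ne (hd i) (Ne.symm h)))
  have hsg : ∀ i, Real.sqrt (d i) * g i = p i := by
    intro i; by_cases h : d i = 0
    · simp [hgdef, hpdef, h]
    · simp [hgdef, hpdef, h, mul_inv_cancel₀ (hsqrt_ne i h)]
  have hgs : ∀ i, g i * Real.sqrt (d i) = p i := by
    intro i; rw [mul_comm]; exact hsg i
  set T : Matrix (Fin m) (Fin m) ℝ := V * diagonal g * star V with hTdef
  set Pi' : Matrix (Fin m) (Fin m) ℝ := V * diagonal p * star V with hPidef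
  have hST : S * T = Pi' := by
    rw [hS, hTdef, cg_mul V hV1, hPidef]
    exact congrArg (fun D => V * D * star V) (congrArg diagonal (funext hsg))
  have hTS : T * S = Pi' := by
    rw [hS, hTdef, cg_mul V hV1, hPidef]
    exact congrArg (fun D => V * D * star V) (congrArg diagonal (funext hgs))
  have hTXT : T * X * T = Pi' := by
    rw [hTdef, hXspec, cg_mul V hV1, cg_mul V hV1, hPidef]
    refine congrArg (fun D => V * D * star V) (congrArg diagonal (funext fun i => ?_))
    by_cases h : d i = 0
    · simp [hgdef, hpdef, h]
    · have h2 : Real.sqrt (d i) * Real.sqrt (d i) = d i := Real.mul_self_sqrt (hd i)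
      simp only [hgdef, hpdef, if_neg h]
      rw [← h2]
      field_simp
      rw [Real.sqrt_sq (Real.sqrt_nonneg _)]
      exact div_self (pow_ne_zero 2 (hsqrt_ne i h))
  have hone : (1 : Matrix (Fin m) (Fin m) ℝ) = V * diagonal (fun _ => 1) * star V := by
    rw [show diagonal (fun _ : Fin m => (1:ℝ)) = 1 from diagonal_one, mul_one, hV2]
  have hXPi0 : X * (1 - Pi') = 0 := by
    rw [hone, hPidef, cg_sub, hXspec, cg_mul V hV1]
    have hz : (fun i => d i * (1 - p i)) = fun _ => (0:ℝ) := by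
      funext i; by_cases h : d i = 0 <;> simp [hpdef, h]
    rw [hz]
    simp
  have hone_sub_Pi : (1 - Pi').PosSemidef := by
    rw [hone, hPidef, cg_sub]
    refine cg_psd V _ fun i => ?_
    by_cases h : d i = 0 <;> simp [hpdef, h]
  have hTherm : Tᴴ = T := by rw [hTdef]; exact cg_herm V g
  have hPiherm : Pi'ᴴ = Pi' := by rw [hPidef]; exact cg_herm V p
  have hSherm : Sᴴ = S := psd_sqrt_herm hX
  have hSS : S * S = X := psd_sqrt_mul_self hX
  -- H data
  set W : Matrix (Fin m) (Fin m) ℝ := ↑hH.eigenvectorUnitary with hWdef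
  set l : Fin m → ℝ := hH.eigenvalues with hldef
  have hW1 : star W * W = 1 := by
    simpa [hWdef] using Matrix.UnitaryGroup.star_mul_self hH.eigenvectorUnitary
  have hHspec : S * B * S = W * diagonal l * star W := by
    have := hH.spectral_theorem
    simpa [RCLike.ofReal_real_eq_id, Unitary.conjStarAlgAut_apply, hWdef, hldef] using this
  set q : Fin m → ℝ := fun i => if 0 < l i then 1 else 0 with hqdef
  set Qp : Matrix (Fin m) (Fin m) ℝ := W * diagonal q * star W with hQpdef
  have hql : ∀ i, q i * l i = max (l i) 0 := by
    intro i; by_cases h : 0 < l i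
    · simp [hqdef, if_pos h, max_eq_left h.le]
    · simp [hqdef, if_neg h, max_eq_right (not_lt.mp h)]
  have htr : ∀ M : Matrix (Fin m) (Fin m) ℝ,
      (S * M * S * B).trace = (M * (S * B * S)).trace := by
    intro M
    rw [show S * M * S * B = S * (M * S * B) by simp only [mul_assoc], trace_mul_comm,
      show M * S * B * S = M * (S * B * S) by simp only [mul_assoc]]
  constructor
  · -- membership
    refine ⟨S * Qp * S, ?_, ?_, ?_⟩
    · have hq0 : ∀ i, 0 ≤ q i := fun i => by by_cases h : 0 < l i <;> simp [hqdef, h]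
      have := (cg_psd W q hq0).mul_mul_conjTranspose_same S
      rw [hSherm] at this
      exact this
    · have h1 : X - S * Qp * S = S * (1 - Qp) * S := by
        rw [mul_sub, sub_mul, mul_one, hSS]
      rw [h1]
      have h2 : (1 - Qp).PosSemidef := by
        rw [show (1 : Matrix (Fin m) (Fin m) ℝ) = W * diagonal (fun _ => 1) * star W by
          rw [show diagonal (fun _ : Fin m => (1:ℝ)) = 1 from diagonal_one, mul_one,
            mul_eq_one_comm.mp hW1], hQpdef, cg_sub]
        refine cg_psd W _ fun i => by by_cases h : 0 < l i <;> simp [hqdef, h]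
      have := h2.mul_mul_conjTranspose_same S
      rwa [hSherm] at this
    · rw [htr Qp, hHspec, hQpdef, cg_mul W hW1, cg_trace W hW1]
      exact Finset.sum_congr rfl fun i _ => (hql i).symm
  · -- upper bound
    rintro r ⟨P, hP, hXP, rfl⟩
    have key : ∀ v, X *ᵥ v = 0 → P *ᵥ v = 0 := by
      intro v hv
      have h1 := hXP.dotProduct_mulVec_nonneg v
      rw [sub_mulVec, dotProduct_sub, hv, dotProduct_zero] at h1
      have h2 := hP.dotProduct_mulVec_nonneg v
      have h3 : star v ⬝ᵥ P *ᵥ v = 0 := le_antisymm (by linarith) h2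
      exact (hP.dotProduct_mulVec_zero_iff v).mp h3
    have hP1 : P * (1 - Pi') = 0 := by
      have hcol : ∀ j, (P * (1 - Pi')) *ᵥ Pi.single j 1 = 0 := by
        intro j
        rw [← mulVec_mulVec]
        apply key
        rw [mulVec_mulVec, hXPi0, zero_mulVec]
      ext i j
      have h := congrFun (hcol j) i
      simpa [mulVec_single] using h
    have hPPi : P * Pi' = P := by
      have h := hP1
      rw [mul_sub, mul_one, sub_eq_zero] at h
      exact h.symm
    have hPiP : Pi' * P = P := by
      have h := congrArg conjTranspose hPPi
      rwa [conjTranspose_mul, hP.1, hPiherm] at h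
    set Q := T * P * T with hQdef
    have hQpsd : Q.PosSemidef := by
      have := hP.conjTranspose_mul_mul_same T
      rwa [hTherm, ← hQdef] at this
    have hSQS : S * Q * S = P := by
      rw [hQdef]
      calc S * (T * P * T) * S = (S * T) * (P * (T * S)) := by simp only [mul_assoc]
        _ = Pi' * (P * Pi') := by rw [hST, hTS]
        _ = P := by rw [hPPi, hPiP]
    have hQle : (1 - Q).PosSemidef := by
      have h1 := hXP.conjTranspose_mul_mul_same T
      rw [hTherm] at h1
      have h2 : T * (X - P) * T = Pi' - Q := by
        rw [hQdef, mul_sub, sub_mul, hTXT]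
      have h3 : (1 : Matrix (Fin m) (Fin m) ℝ) - Q = (1 - Pi') + (Pi' - Q) :=
        (sub_add_sub_cancel 1 Pi' Q).symm
      rw [h3]
      exact hone_sub_Pi.add (h2 ▸ h1)
    have hPB : (P * B).trace = (Q * (W * diagonal l * star W)).trace := by
      rw [← hSQS, htr Q, hHspec]
    set Hp : Matrix (Fin m) (Fin m) ℝ := W * diagonal (fun i => max (l i) 0) * star W
      with hHpdef
    set Hm : Matrix (Fin m) (Fin m) ℝ := W * diagonal (fun i => max (-l i) 0) * star W
      with hHmdef
    have hHsplit : W * diagonal l * star W = Hp - Hm := by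
      rw [hHpdef, hHmdef, cg_sub]
      refine (congrArg (fun D => W * D * star W)
        (congrArg diagonal (funext fun i => ?_))).symm
      rcases le_total (l i) 0 with h | h
      · simp [max_eq_right h, max_eq_left (neg_nonneg.mpr h)]
      · simp [max_eq_left h, max_eq_right (neg_nonpos.mpr h)]
    have e3 : 0 ≤ ((1 - Q) * Hp).trace :=
      trace_mul_nonneg hQle (by rw [hHpdef]; exact cg_psd W _ fun i => le_max_right _ _)
    have e4 : 0 ≤ (Q * Hm).trace :=
      trace_mul_nonneg hQpsd (by rw [hHmdef]; exact cg_psd W _ fun i => le_max_right _ _)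
    have e5 : Hp.trace = ∑ i, max (l i) 0 := by rw [hHpdef]; exact cg_trace W hW1 _
    have expand1 : ((1 - Q) * Hp).trace = Hp.trace - (Q * Hp).trace := by
      rw [sub_mul, one_mul, trace_sub]
    have expand2 : (Q * (W * diagonal l * star W)).trace
        = (Q * Hp).trace - (Q * Hm).trace := by
      rw [hHsplit, mul_sub, trace_sub]
    rw [hPB, expand2] at *
    show (Q * Hp).trace - (Q * Hm).trace ≤ ∑ i, max (l i) 0
    linarith [e3, e4, expand1, e5]
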